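/- Let d ≥ 1, let U ⊆ ℝ^d be an open set, let u, v : U → ℝ be twice continuously differentiable, and let Θ : U → ℝ^d be differentiable on U. Define the vector field V : U → ℝ^d by V(x) = ⟨Θ(x),∇v(x)⟩·∇u(x) + ⟨Θ(x),∇u(x)⟩·∇v(x) − ⟨∇u(x),∇v(x)⟩·Θ(x). Then V is differentiable on U and for every x ∈ U: (div Θ(x))·⟨∇u(x),∇v(x)⟩ − ⟨DΘ(x)∇u(x), ∇v(x)⟩ − ⟨∇u(x), DΘ(x)∇v(x)⟩ = Δu(x)·⟨Θ(x),∇v(x)⟩ + Δv(x)·⟨Θ(x),∇u(x)⟩ − div V(x). -/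

import Mathlib

open scoped RealInnerProductSpace

/-- The divergence `div W(x) = trace (DW(x))` of a vector field `W : ℝ^d → ℝ^d`. -/
noncomputable def vdiv {d : ℕ} (W : EuclideanSpace ℝ (Fin d) → EuclideanSpace ℝ (Fin d))
    (x : EuclideanSpace ℝ (Fin d)) : ℝ :=
  LinearMap.trace ℝ (EuclideanSpace ℝ (Fin d))
    ((fderiv ℝ W x : EuclideanSpace ℝ (Fin d) →ₗ[ℝ] EuclideanSpace ℝ (Fin d)))

/-- The Laplacian `Δu(x) = div (∇u)(x)` (the trace of the Hessian) of `u : ℝ^d → ℝ`. -/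
noncomputable def lap {d : ℕ} (u : EuclideanSpace ℝ (Fin d) → ℝ)
    (x : EuclideanSpace ℝ (Fin d)) : ℝ :=
  vdiv (gradient u) x

open InnerProductSpace

variable {d : ℕ}
local notation "E" => EuclideanSpace ℝ (Fin d)

lemma trace_eq_sum_inner' (T : EuclideanSpace ℝ (Fin d) →ₗ[ℝ] EuclideanSpace ℝ (Fin d)) :
    LinearMap.trace ℝ _ T =
      ∑ i, ⟪T (EuclideanSpace.basisFun (Fin d) ℝ i), EuclideanSpace.basisFun (Fin d) ℝ i⟫ := by
  set b := EuclideanSpace.basisFun (Fin d) ℝ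
  rw [LinearMap.trace_eq_matrix_trace ℝ b.toBasis, Matrix.trace]
  congr 1
  ext i
  rw [Matrix.diag_apply, LinearMap.toMatrix_apply, b.coe_toBasis,
    b.coe_toBasis_repr_apply, b.repr_apply_apply, real_inner_comm]

lemma trace_smulRight' (L : EuclideanSpace ℝ (Fin d) →L[ℝ] ℝ) (w : EuclideanSpace ℝ (Fin d)) :
    LinearMap.trace ℝ _ ((L.smulRight w : EuclideanSpace ℝ (Fin d) →L[ℝ] EuclideanSpace ℝ (Fin d))
      : EuclideanSpace ℝ (Fin d) →ₗ[ℝ] EuclideanSpace ℝ (Fin d)) = L w := by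
  set b := EuclideanSpace.basisFun (Fin d) ℝ
  rw [trace_eq_sum_inner']
  conv_rhs => rw [← b.sum_repr' w]
  rw [map_sum]
  refine Finset.sum_congr rfl fun i _ => ?_
  show ⟪L (b i) • w, b i⟫ = L (⟪b i, w⟫ • b i)
  rw [map_smul, smul_eq_mul, real_inner_smul_left, real_inner_comm, mul_comm]

lemma grad_diffAt {u : EuclideanSpace ℝ (Fin d) → ℝ} {x : EuclideanSpace ℝ (Fin d)}
    (hu : ContDiffAt ℝ 2 u x) : DifferentiableAt ℝ (gradient u) x := by
  have h1 : ContDiffAt ℝ 1 (fderiv ℝ u) x := hu.fderiv_right (by norm_num)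
  have h2 : DifferentiableAt ℝ (fderiv ℝ u) x := h1.differentiableAt one_ne_zero
  have : gradient u = fun y => (toDual ℝ (EuclideanSpace ℝ (Fin d))).symm (fderiv ℝ u y) := rfl
  rw [this]
  set e := (toDual ℝ (EuclideanSpace ℝ (Fin d))).symm.toContinuousLinearEquiv with he
  exact (e.toContinuousLinearMap.differentiableAt).comp x h2

lemma grad_fderiv_symm {u : EuclideanSpace ℝ (Fin d) → ℝ} {x : EuclideanSpace ℝ (Fin d)}
    (hu : ContDiffAt ℝ 2 u x) (a b : EuclideanSpace ℝ (Fin d)) :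
    ⟪fderiv ℝ (gradient u) x a, b⟫ = ⟪fderiv ℝ (gradient u) x b, a⟫ := by
  have h1 : ContDiffAt ℝ 1 (fderiv ℝ u) x := hu.fderiv_right (by norm_num)
  have h2 : DifferentiableAt ℝ (fderiv ℝ u) x := h1.differentiableAt one_ne_zero
  have hg : HasFDerivAt (gradient u) (fderiv ℝ (gradient u) x) x :=
    (grad_diffAt hu).hasFDerivAt
  have key : ∀ c w : EuclideanSpace ℝ (Fin d),
      ⟪fderiv ℝ (gradient u) x c, w⟫ = fderiv ℝ (fderiv ℝ u) x c w := by
    intro c w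
    have hA : HasFDerivAt (fun y => (innerSL ℝ w) (gradient u y))
        ((innerSL ℝ w).comp (fderiv ℝ (gradient u) x)) x :=
      (innerSL ℝ w).hasFDerivAt.comp x hg
    have hB : HasFDerivAt (fun y => (ContinuousLinearMap.apply ℝ ℝ w) (fderiv ℝ u y))
        ((ContinuousLinearMap.apply ℝ ℝ w).comp (fderiv ℝ (fderiv ℝ u) x)) x :=
      (ContinuousLinearMap.apply ℝ ℝ w).hasFDerivAt.comp x h2.hasFDerivAt
    have hfun : (fun y => (innerSL ℝ w) (gradient u y))
        = fun y => (ContinuousLinearMap.apply ℝ ℝ w) (fderiv ℝ u y) := by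
      funext y
      show ⟪w, gradient u y⟫ = fderiv ℝ u y w
      rw [real_inner_comm]
      exact toDual_symm_apply
    rw [hfun] at hA
    have := hA.unique hB
    have := congrArg (fun (T : EuclideanSpace ℝ (Fin d) →L[ℝ] ℝ) => T c) this
    simpa [real_inner_comm, mul_comm] using this
  have hsymm : IsSymmSndFDerivAt ℝ u x := hu.isSymmSndFDerivAt (by simp)
  rw [key a b, key b a, hsymm a b]

/-- For `u, v` twice continuously differentiable and `Θ` differentiable on an
open set `U ⊆ ℝ^d`, the vector field
`V = ⟨Θ,∇v⟩∇u + ⟨Θ,∇u⟩∇v − ⟨∇u,∇v⟩Θ` is differentiable on `U` and satisfies the pointwise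
divergence identity
`(div Θ)⟨∇u,∇v⟩ − ⟨DΘ∇u,∇v⟩ − ⟨∇u,DΘ∇v⟩ = Δu ⟨Θ,∇v⟩ + Δv ⟨Θ,∇u⟩ − div V` on `U`. -/
theorem pointwise_divergence_identity_for_shape_derivative
    (d : ℕ) (hd : 1 ≤ d)
    (U : Set (EuclideanSpace ℝ (Fin d))) (hU : IsOpen U)
    (u v : EuclideanSpace ℝ (Fin d) → ℝ)
    (hu : ContDiffOn ℝ 2 u U) (hv : ContDiffOn ℝ 2 v U)
    (Θ : EuclideanSpace ℝ (Fin d) → EuclideanSpace ℝ (Fin d))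
    (hΘ : DifferentiableOn ℝ Θ U)
    (V : EuclideanSpace ℝ (Fin d) → EuclideanSpace ℝ (Fin d))
    (hV : ∀ x, V x = ⟪Θ x, gradient v x⟫ • gradient u x + ⟪Θ x, gradient u x⟫ • gradient v x
        - ⟪gradient u x, gradient v x⟫ • Θ x) :
    DifferentiableOn ℝ V U ∧
    ∀ x ∈ U,
      vdiv Θ x * ⟪gradient u x, gradient v x⟫
          - ⟪fderiv ℝ Θ x (gradient u x), gradient v x⟫
          - ⟪gradient u x, fderiv ℝ Θ x (gradient v x)⟫ =
        lap u x * ⟪Θ x, gradient v x⟫ + lap v x * ⟪Θ x, gradient u x⟫ - vdiv V x := by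
  have hVf : V = fun y => ⟪Θ y, gradient v y⟫ • gradient u y + ⟪Θ y, gradient u y⟫ • gradient v y
      - ⟪gradient u y, gradient v y⟫ • Θ y := funext hV
  have hgud : DifferentiableOn ℝ (gradient u) U := fun y hy =>
    (grad_diffAt (hu.contDiffAt (hU.mem_nhds hy))).differentiableWithinAt
  have hgvd : DifferentiableOn ℝ (gradient v) U := fun y hy =>
    (grad_diffAt (hv.contDiffAt (hU.mem_nhds hy))).differentiableWithinAt
  constructor
  · rw [hVf]
    exact (((hΘ.inner ℝ hgvd).smul hgud).add ((hΘ.inner ℝ hgud).smul hgvd)).sub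
      ((hgud.inner ℝ hgvd).smul hΘ)
  intro x hx
  have hxU : U ∈ nhds x := hU.mem_nhds hx
  have hux : ContDiffAt ℝ 2 u x := hu.contDiffAt hxU
  have hvx : ContDiffAt ℝ 2 v x := hv.contDiffAt hxU
  set Hu := fderiv ℝ (gradient u) x with hHu
  set Hv := fderiv ℝ (gradient v) x with hHv
  set A := fderiv ℝ Θ x with hA
  have hgu : HasFDerivAt (gradient u) Hu x := (grad_diffAt hux).hasFDerivAt
  have hgv : HasFDerivAt (gradient v) Hv x := (grad_diffAt hvx).hasFDerivAt
  have hΘx : HasFDerivAt Θ A x := (hΘ.differentiableAt hxU).hasFDerivAt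
  have h1 := hΘx.inner ℝ hgv
  have h2 := hΘx.inner ℝ hgu
  have h3 := hgu.inner ℝ hgv
  have hD := ((h1.smul hgu).add (h2.smul hgv)).sub (h3.smul hΘx)
  replace hD := hD.congr_of_eventuallyEq (f₁ := V) (Filter.Eventually.of_forall hV)
  have hfd := hD.fderiv
  have hsymmu : ∀ a b, ⟪Hu a, b⟫ = ⟪Hu b, a⟫ := grad_fderiv_symm hux
  have hsymmv : ∀ a b, ⟪Hv a, b⟫ = ⟪Hv b, a⟫ := grad_fderiv_symm hvx
  unfold vdiv lap vdiv
  rw [hfd]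
  simp only [ContinuousLinearMap.coe_add, ContinuousLinearMap.coe_sub,
    ContinuousLinearMap.coe_smul, map_add, map_sub, map_smul, trace_smulRight', smul_eq_mul,
    ContinuousLinearMap.comp_apply, ContinuousLinearMap.prod_apply, fderivInnerCLM_apply,
    ← hHu, ← hHv, ← hA]
  linarith [hsymmu (Θ x) (gradient v x), hsymmv (Θ x) (gradient u x),
    real_inner_comm (Θ x) (Hu (gradient v x)), real_inner_comm (Θ x) (Hv (gradient u x)),
    real_inner_comm (gradient u x) (Hv (Θ x)), real_inner_comm (gradient u x) (A (gradient v x)),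
    real_inner_comm (gradient u x) (gradient v x), real_inner_comm (Θ x) (gradient u x),
    real_inner_comm (Θ x) (gradient v x)]
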